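/- Let G be a commutative multiplicative group, K a G-graded field, and g ∈ G. Then every nonzero homogeneous ideal I of the graded polynomial ring K[g⁻¹T] is principal, and it has a unique monic homogeneous generator. -/

import Mathlib

universe u v

/-- A `G`-graded commutative ring structure on `A`: graded pieces `deg g`,
multiplicativity of the grading, and an internal direct sum decomposition
recorded by the homogeneous-component function `comp`. -/
structure GradedStr (G : Type u) [CommGroup G] (A : Type v) [CommRing A] where
  deg : G → AddSubgroup A
  one_mem : (1 : A) ∈ deg 1
  mul_mem : ∀ {g h : G} {a b : A}, a ∈ deg g → b ∈ deg h → a * b ∈ deg (g * h)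
  comp : A → G → A
  comp_mem : ∀ a g, comp a g ∈ deg g
  comp_add : ∀ a b g, comp (a + b) g = comp a g + comp b g
  comp_of_mem : ∀ {a : A} {g : G}, a ∈ deg g → comp a g = a
  comp_of_mem_ne : ∀ {a : A} {g g' : G}, a ∈ deg g → g' ≠ g → comp a g' = 0
  finite_support : ∀ a : A, (Function.support (comp a)).Finite
  sum_comp : ∀ a : A, ∑ᶠ g, comp a g = a

namespace GradedStr

variable {G : Type u} [CommGroup G] {A : Type v} [CommRing A]

/-- `a` is homogeneous: it lies in some graded piece. -/
def IsHomog (𝒜 : GradedStr G A) (a : A) : Prop := ∃ g, a ∈ 𝒜.deg g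

/-- A `G`-graded field: a nonzero graded ring in which every nonzero homogeneous
element is invertible. -/
def IsGradedField (𝒜 : GradedStr G A) : Prop :=
  Nontrivial A ∧ ∀ a : A, 𝒜.IsHomog a → a ≠ 0 → IsUnit a

/-- A graded subring: a subring stable under taking homogeneous components. -/
def IsGradedSubring (𝒜 : GradedStr G A) (S : Subring A) : Prop :=
  ∀ x ∈ S, ∀ g, 𝒜.comp x g ∈ S

/-- A graded subfield of a graded field: a graded subring containing the inverses of
its nonzero homogeneous elements. -/
def IsGradedSubfield (𝒜 : GradedStr G A) (S : Subring A) : Prop :=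
  𝒜.IsGradedSubring S ∧ ∀ x ∈ S, 𝒜.IsHomog x → x ≠ 0 → Ring.inverse x ∈ S

/-- The additive subgroup of homogeneous polynomials of grading `h` in `K[g₀⁻¹ T]`,
the polynomial ring in which `T` is declared homogeneous of grading `g₀`: the
coefficient of `T^n` must be homogeneous of grading `h * g₀⁻ⁿ`. -/
def polyDeg (𝒜 : GradedStr G A) (g₀ h : G) : AddSubgroup (Polynomial A) where
  carrier := {p | ∀ n : ℕ, p.coeff n ∈ 𝒜.deg (h * (g₀ ^ n)⁻¹)}
  zero_mem' := by intro n; simpa using (𝒜.deg (h * (g₀ ^ n)⁻¹)).zero_mem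
  add_mem' := by
    intro p q hp hq n
    rw [Polynomial.coeff_add]
    exact (𝒜.deg _).add_mem (hp n) (hq n)
  neg_mem' := by
    intro p hp n
    rw [Polynomial.coeff_neg]
    exact (𝒜.deg _).neg_mem (hp n)

/-- A homogeneous polynomial in `K[g₀⁻¹T]`. -/
def IsHomogPoly (𝒜 : GradedStr G A) (g₀ : G) (p : Polynomial A) : Prop :=
  ∃ h, p ∈ 𝒜.polyDeg g₀ h

/-- The graded fraction field of a graded subring of a graded field, computed inside
the ambient graded field: the subring generated by `S` together with the inverses of
the nonzero homogeneous elements of `S`. -/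
def fracIn (𝒜 : GradedStr G A) (S : Subring A) : Subring A :=
  Subring.closure (↑S ∪ {y : A | ∃ x ∈ S, x ≠ 0 ∧ 𝒜.IsHomog x ∧ y = Ring.inverse x})

end GradedStr

/-- `x` is integral over the subring `S` (satisfies a monic polynomial equation with
coefficients in `S`). -/
def IntegralOver {A : Type v} [CommRing A] (S : Subring A) (x : A) : Prop :=
  ∃ p : Polynomial A, p.Monic ∧ (∀ n, p.coeff n ∈ S) ∧ Polynomial.eval x p = 0

/-- Algebraic independence of a family of elements over a subring: the evaluation map
from the (multivariate) polynomial ring is injective.  (For homogeneous elements this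
is graded algebraic independence, the grading playing no role in injectivity.) -/
def AlgIndepOver {A : Type v} [CommRing A] {ι : Type*} (S : Subring A) (T : ι → A) : Prop :=
  Function.Injective (MvPolynomial.eval₂Hom S.subtype T)

/-- A graded valuation ring of the graded subfield `F` of the ambient graded field:
a graded subring `O ⊆ F` such that every nonzero homogeneous element `f` of `F`
satisfies `f ∈ O` or `f⁻¹ ∈ O`. -/
def IsGVRofSubfield {G : Type u} [CommGroup G] {A : Type v} [CommRing A]
    (𝒜 : GradedStr G A) (F : Subring A) (O : Subring A) : Prop :=
  O ≤ F ∧ 𝒜.IsGradedSubring O ∧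
    ∀ f ∈ F, f ≠ 0 → 𝒜.IsHomog f → f ∈ O ∨ Ring.inverse f ∈ O


namespace GradedStr

variable {G : Type u} [CommGroup G] {K : Type v} [CommRing K]

lemma comp_zero' (𝒜 : GradedStr G K) (g : G) : 𝒜.comp 0 g = 0 := by
  have h : 𝒜.comp 0 g + 𝒜.comp 0 g = 𝒜.comp 0 g + 0 := by
    rw [← 𝒜.comp_add, add_zero, add_zero]
  exact add_left_cancel h

/-- `comp · g` as an additive hom. -/
def compHom (𝒜 : GradedStr G K) (g : G) : K →+ K where
  toFun a := 𝒜.comp a g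
  map_zero' := 𝒜.comp_zero' g
  map_add' a b := 𝒜.comp_add a b g

lemma comp_mul_homog (𝒜 : GradedStr G K) {g : G} {a : K} (ha : a ∈ 𝒜.deg g)
    (b : K) (h : G) : 𝒜.comp (a * b) (g * h) = a * 𝒜.comp b h := by
  conv_lhs => rw [← 𝒜.sum_comp b]
  have hfin : (Function.support fun h' => a * 𝒜.comp b h').Finite := by
    apply (𝒜.finite_support b).subset
    intro x hx
    simp only [Function.mem_support] at hx ⊢
    intro h0; apply hx; rw [h0, mul_zero]
  rw [mul_finsum' _ a (𝒜.finite_support b)]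
  have hmap : 𝒜.comp (∑ᶠ h', a * 𝒜.comp b h') (g * h)
      = ∑ᶠ h', 𝒜.comp (a * 𝒜.comp b h') (g * h) :=
    (𝒜.compHom (g * h)).map_finsum hfin
  rw [hmap]
  rw [finsum_eq_single _ h]
  · exact 𝒜.comp_of_mem (𝒜.mul_mem ha (𝒜.comp_mem b h))
  · intro x hx
    apply 𝒜.comp_of_mem_ne (𝒜.mul_mem ha (𝒜.comp_mem b x))
    intro hgx
    exact hx (mul_left_cancel hgx).symm

lemma inverse_mem (𝒜 : GradedStr G K) (hK : 𝒜.IsGradedField) {g : G} {a : K}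
    (ha : a ∈ 𝒜.deg g) (h0 : a ≠ 0) : Ring.inverse a ∈ 𝒜.deg g⁻¹ := by
  have hu : IsUnit a := hK.2 a ⟨g, ha⟩ h0
  have h1 : a * Ring.inverse a = 1 := Ring.mul_inverse_cancel a hu
  have h2 : 𝒜.comp (a * Ring.inverse a) (g * g⁻¹) = a * 𝒜.comp (Ring.inverse a) g⁻¹ :=
    𝒜.comp_mul_homog ha (Ring.inverse a) g⁻¹
  rw [h1, mul_inv_cancel] at h2
  have h3 : 𝒜.comp (1 : K) (1 : G) = 1 := 𝒜.comp_of_mem 𝒜.one_mem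
  rw [h3] at h2
  have h4 : Ring.inverse a = 𝒜.comp (Ring.inverse a) g⁻¹ := by
    calc Ring.inverse a = Ring.inverse a * (a * 𝒜.comp (Ring.inverse a) g⁻¹) := by
          rw [← h2, mul_one]
      _ = (a * Ring.inverse a) * 𝒜.comp (Ring.inverse a) g⁻¹ := by ring
      _ = 𝒜.comp (Ring.inverse a) g⁻¹ := by rw [h1, one_mul]
  rw [h4]
  exact 𝒜.comp_mem _ _

/-- Homogeneous component of grading `h` of a polynomial in `K[g₀⁻¹T]`. -/
noncomputable def pc (𝒜 : GradedStr G K) (g₀ : G) (p : Polynomial K) (h : G) :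
    Polynomial K :=
  ∑ n ∈ p.support, Polynomial.C (𝒜.comp (p.coeff n) (h * (g₀ ^ n)⁻¹)) * Polynomial.X ^ n

lemma pc_coeff (𝒜 : GradedStr G K) (g₀ : G) (p : Polynomial K) (h : G) (m : ℕ) :
    (𝒜.pc g₀ p h).coeff m = 𝒜.comp (p.coeff m) (h * (g₀ ^ m)⁻¹) := by
  rw [pc, Polynomial.finset_sum_coeff]
  simp_rw [Polynomial.coeff_C_mul, Polynomial.coeff_X_pow, mul_ite, mul_one, mul_zero]
  rw [Finset.sum_ite_eq p.support m (fun n => 𝒜.comp (p.coeff n) (h * (g₀ ^ n)⁻¹))]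
  split_ifs with hm
  · rfl
  · rw [Polynomial.notMem_support_iff.mp hm, 𝒜.comp_zero']

lemma pc_zero (𝒜 : GradedStr G K) (g₀ : G) (h : G) : 𝒜.pc g₀ 0 h = 0 := by
  ext m
  rw [pc_coeff, Polynomial.coeff_zero, 𝒜.comp_zero']

lemma pc_mem (𝒜 : GradedStr G K) (g₀ : G) (p : Polynomial K) (h : G) :
    𝒜.pc g₀ p h ∈ 𝒜.polyDeg g₀ h := by
  intro n; rw [pc_coeff]; exact 𝒜.comp_mem _ _

lemma pc_of_mem (𝒜 : GradedStr G K) {g₀ : G} {p : Polynomial K} {h : G}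
    (hp : p ∈ 𝒜.polyDeg g₀ h) : 𝒜.pc g₀ p h = p := by
  ext m; rw [pc_coeff]; exact 𝒜.comp_of_mem (hp m)

lemma pc_sub (𝒜 : GradedStr G K) (g₀ : G) (p q : Polynomial K) (h : G) :
    𝒜.pc g₀ (p - q) h = 𝒜.pc g₀ p h - 𝒜.pc g₀ q h := by
  ext m
  simp only [pc_coeff, Polynomial.coeff_sub]
  exact map_sub (𝒜.compHom _) _ _

lemma pc_natDegree_le (𝒜 : GradedStr G K) (g₀ : G) (p : Polynomial K) (h : G) :
    (𝒜.pc g₀ p h).natDegree ≤ p.natDegree := by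
  rw [Polynomial.natDegree_le_iff_coeff_eq_zero]
  intro m hm
  rw [pc_coeff, Polynomial.coeff_eq_zero_of_natDegree_lt hm, 𝒜.comp_zero']

lemma pc_mul_homog (𝒜 : GradedStr G K) {g₀ : G} {f : Polynomial K} {hf : G}
    (hfm : f ∈ 𝒜.polyDeg g₀ hf) (q : Polynomial K) (h : G) :
    𝒜.pc g₀ (f * q) h = f * 𝒜.pc g₀ q (h * hf⁻¹) := by
  ext m
  rw [pc_coeff, Polynomial.coeff_mul, Polynomial.coeff_mul]
  have hmap : 𝒜.comp (∑ x ∈ Finset.HasAntidiagonal.antidiagonal m, f.coeff x.1 * q.coeff x.2)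
      (h * (g₀ ^ m)⁻¹)
      = ∑ x ∈ Finset.HasAntidiagonal.antidiagonal m, 𝒜.comp (f.coeff x.1 * q.coeff x.2)
          (h * (g₀ ^ m)⁻¹) :=
    map_sum (𝒜.compHom _) _ _
  rw [hmap]
  refine Finset.sum_congr rfl fun x hx => ?_
  have hxm : x.1 + x.2 = m := Finset.HasAntidiagonal.mem_antidiagonal.mp hx
  have hg : h * (g₀ ^ m)⁻¹
      = (hf * (g₀ ^ x.1)⁻¹) * ((h * hf⁻¹ * (g₀ ^ x.2)⁻¹)) := by
    rw [← hxm, pow_add, mul_inv]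
    simp [mul_comm, mul_left_comm, mul_assoc]
  rw [hg, 𝒜.comp_mul_homog (hfm x.1), pc_coeff]

end GradedStr

/-- Let `G` be a commutative multiplicative group, `K` a `G`-graded
field, and `g₀ ∈ G`.  Every nonzero homogeneous ideal `I` of the graded polynomial
ring `K[g₀⁻¹T]` (an ideal generated by homogeneous elements) is principal, with a
unique monic homogeneous generator. -/
theorem homogeneous_ideal_principal_unique_monic_generator
    {G : Type u} [CommGroup G] {K : Type v} [CommRing K]
    (𝒜 : GradedStr G K) (hK : 𝒜.IsGradedField) (g₀ : G)
    (I : Ideal (Polynomial K))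
    (hIhom : ∃ S : Set (Polynomial K),
      (∀ p ∈ S, 𝒜.IsHomogPoly g₀ p) ∧ I = Ideal.span S)
    (hI0 : I ≠ ⊥) :
    ∃! f : Polynomial K, f.Monic ∧ 𝒜.IsHomogPoly g₀ f ∧ I = Ideal.span {f} := by
  classical
  obtain ⟨S, hShom, hIS⟩ := hIhom
  have hKnt : Nontrivial K := hK.1
  -- there is a nonzero homogeneous polynomial in I
  have hex : ∃ n : ℕ, ∃ p : Polynomial K,
      p ∈ I ∧ p ≠ 0 ∧ 𝒜.IsHomogPoly g₀ p ∧ p.natDegree = n := by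
    by_contra hcon
    push_neg at hcon
    apply hI0
    rw [hIS, Ideal.span_eq_bot]
    intro p hp
    by_contra hp0
    exact hcon p.natDegree p (hIS ▸ Ideal.subset_span hp) hp0 (hShom p hp) rfl
  obtain ⟨p0, hp0I, hp00, ⟨h0, hp0h⟩, hp0d⟩ := Nat.find_spec hex
  set d := p0.natDegree with hdd
  have hmin : ∀ q : Polynomial K, q ∈ I → q ≠ 0 → 𝒜.IsHomogPoly g₀ q →
      d ≤ q.natDegree := by
    intro q hqI hq0 hqh
    exact le_of_eq_of_le hp0d (Nat.find_min' hex ⟨q, hqI, hq0, hqh, rfl⟩)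
  -- leading coefficient is a homogeneous unit
  set c : K := p0.coeff d with hc
  have hcmem : c ∈ 𝒜.deg (h0 * (g₀ ^ d)⁻¹) := hp0h d
  have hc0 : c ≠ 0 := Polynomial.leadingCoeff_ne_zero.mpr hp00
  set u : K := Ring.inverse c with hu
  have humem : u ∈ 𝒜.deg (h0 * (g₀ ^ d)⁻¹)⁻¹ := 𝒜.inverse_mem hK hcmem hc0
  have huc : u * c = 1 := Ring.inverse_mul_cancel c (hK.2 c ⟨_, hcmem⟩ hc0)
  set f : Polynomial K := Polynomial.C u * p0 with hf
  have hfI : f ∈ I := I.mul_mem_left _ hp0I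
  have hfcoeff : ∀ n, f.coeff n = u * p0.coeff n := by
    intro n; rw [hf, Polynomial.coeff_C_mul]
  have hfd : f.coeff d = 1 := by rw [hfcoeff, ← hc, huc]
  have hfdeg : f.natDegree = d := by
    apply le_antisymm
    · rw [Polynomial.natDegree_le_iff_coeff_eq_zero]
      intro m hm
      rw [hfcoeff, Polynomial.coeff_eq_zero_of_natDegree_lt hm, mul_zero]
    · exact Polynomial.le_natDegree_of_ne_zero (hfd ▸ one_ne_zero)
  have hfmonic : f.Monic := by
    unfold Polynomial.Monic Polynomial.leadingCoeff
    rw [hfdeg, hfd]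
  have hfhom : f ∈ 𝒜.polyDeg g₀ (g₀ ^ d) := by
    intro n
    have : g₀ ^ d * (g₀ ^ n)⁻¹
        = (h0 * (g₀ ^ d)⁻¹)⁻¹ * (h0 * (g₀ ^ n)⁻¹) := by group
    rw [hfcoeff, this]
    exact 𝒜.mul_mem humem (hp0h n)
  have hf0 : f ≠ 0 := hfmonic.ne_zero
  -- every homogeneous element of I of some grading h is divisible by f
  have hdvd : ∀ p : Polynomial K, p ∈ I → 𝒜.IsHomogPoly g₀ p →
      p ∈ Ideal.span ({f} : Set (Polynomial K)) := by
    intro p hpI ⟨h, hph⟩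
    set q := p /ₘ f with hq
    set r := p %ₘ f with hr
    have hdiv : r + f * q = p := Polynomial.modByMonic_add_div p f
    have hrI : r ∈ I := by
      have : r = p - f * q := by rw [← hdiv]; ring
      rw [this]
      exact I.sub_mem hpI (I.mul_mem_right _ hfI)
    have hpcr : 𝒜.pc g₀ r h = p - f * 𝒜.pc g₀ q (h * (g₀ ^ d)⁻¹) := by
      have : r = p - f * q := by rw [← hdiv]; ring
      rw [this, 𝒜.pc_sub, 𝒜.pc_of_mem hph, 𝒜.pc_mul_homog hfhom]
    have hpcrI : 𝒜.pc g₀ r h ∈ I := by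
      rw [hpcr]
      exact I.sub_mem hpI (I.mul_mem_right _ hfI)
    have hpcr0 : 𝒜.pc g₀ r h = 0 := by
      by_contra hne
      have hr0 : r ≠ 0 := by
        intro h0'
        exact hne (by rw [h0', 𝒜.pc_zero])
      have hdle : d ≤ (𝒜.pc g₀ r h).natDegree :=
        hmin _ hpcrI hne ⟨h, 𝒜.pc_mem g₀ r h⟩
      have hdlt : (𝒜.pc g₀ r h).natDegree < d := by
        calc (𝒜.pc g₀ r h).natDegree ≤ r.natDegree := 𝒜.pc_natDegree_le g₀ r h
          _ < f.natDegree := by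
              apply Polynomial.natDegree_lt_natDegree hr0
              exact Polynomial.degree_modByMonic_lt p hfmonic
          _ = d := hfdeg
      omega
    rw [Ideal.mem_span_singleton']
    refine ⟨𝒜.pc g₀ q (h * (g₀ ^ d)⁻¹), ?_⟩
    have h2 := hpcr
    rw [hpcr0] at h2
    linear_combination h2
  have hspan : I = Ideal.span ({f} : Set (Polynomial K)) := by
    apply le_antisymm
    · rw [hIS, Ideal.span_le]
      intro p hp
      exact hdvd p (hIS ▸ Ideal.subset_span hp) (hShom p hp)
    · rw [Ideal.span_le, Set.singleton_subset_iff]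
      exact hfI
  refine ⟨f, ⟨hfmonic, ⟨g₀ ^ d, hfhom⟩, hspan⟩, ?_⟩
  -- uniqueness
  rintro f' ⟨hf'monic, -, hspan'⟩
  have hff' : f ∈ Ideal.span ({f'} : Set (Polynomial K)) := hspan' ▸ hfI
  have hf'I : f' ∈ I := by
    rw [hspan']
    exact Ideal.subset_span (Set.mem_singleton f')
  have hf'f : f' ∈ Ideal.span ({f} : Set (Polynomial K)) := hspan ▸ hf'I
  obtain ⟨a, ha⟩ := Ideal.mem_span_singleton'.mp hf'f
  obtain ⟨b, hb⟩ := Ideal.mem_span_singleton'.mp hff'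
  have ha0 : a ≠ 0 := by
    intro h0'
    rw [h0', zero_mul] at ha
    exact hf'monic.ne_zero ha.symm
  have hb0 : b ≠ 0 := by
    intro h0'
    rw [h0', zero_mul] at hb
    exact hfmonic.ne_zero hb.symm
  have hdeg' : f'.natDegree = f.natDegree + a.natDegree := by
    rw [← ha, mul_comm]
    exact hfmonic.natDegree_mul' ha0
  have hdeg : f.natDegree = f'.natDegree + b.natDegree := by
    rw [← hb, mul_comm]
    exact hf'monic.natDegree_mul' hb0
  have hadeg : a.natDegree = 0 := by omega
  have haC : a = Polynomial.C (a.coeff 0) := (Polynomial.eq_C_of_natDegree_eq_zero hadeg)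
  have hcoe : a.coeff 0 = 1 := by
    have hd : f'.natDegree = f.natDegree := by omega
    have h1 : f'.coeff f.natDegree = 1 := by
      rw [← hd]
      exact hf'monic.coeff_natDegree
    rw [← ha, haC, Polynomial.coeff_C_mul, hfmonic.coeff_natDegree, mul_one] at h1
    exact h1
  rw [← ha, haC, hcoe, Polynomial.C_1, one_mul]
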